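/- Let α ∈ (0,1), η > 0, let (s_t)_{t≥1} be an arbitrary sequence in [0,1], let τ_1 ∈ [0,1], and define τ_{t+1} = τ_t − η·(1{s_t ≤ τ_t} − (1−α)) for every t ≥ 1. Then for every integer T ≥ 1: | Σ_{t=1}^T ( 1{s_t ≤ τ_t} − (1−α) ) | ≤ 1/η + max(α, 1−α). -/

import Mathlib

/-- the accumulated pinball subgradients of ACI with constant learning rate
telescope to a bounded quantity. -/
theorem aci_sum_grad_bounded_constant_lr
    (α η : ℝ) (hα : α ∈ Set.Ioo (0:ℝ) 1) (hη : 0 < η)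
    (s : ℕ → ℝ) (hs : ∀ t, 1 ≤ t → s t ∈ Set.Icc (0:ℝ) 1)
    (τ : ℕ → ℝ) (hτ1 : τ 1 ∈ Set.Icc (0:ℝ) 1)
    (hupd : ∀ t, 1 ≤ t →
      τ (t + 1) = τ t - η * ((if s t ≤ τ t then (1:ℝ) else 0) - (1 - α)))
    (T : ℕ) (hT : 1 ≤ T) :
    |∑ t ∈ Finset.Icc 1 T, ((if s t ≤ τ t then (1:ℝ) else 0) - (1 - α))|
      ≤ 1 / η + max α (1 - α) := by
  obtain ⟨hα0, hα1⟩ := hα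
  -- bounds on τ
  have hbound : ∀ t, 1 ≤ t → -(α * η) ≤ τ t ∧ τ t ≤ 1 + (1 - α) * η := by
    intro t ht
    induction t, ht using Nat.le_induction with
    | base =>
      constructor
      · nlinarith [hτ1.1]
      · nlinarith [hτ1.2]
    | succ n hn ih =>
      rw [hupd n hn]
      obtain ⟨ihl, ihr⟩ := ih
      by_cases h : s n ≤ τ n
      · simp only [h, if_pos]
        have hs0 := (hs n hn).1
        constructor
        · nlinarith
        · nlinarith
      · simp only [h, if_neg, not_false_iff]
        have hs1 := (hs n hn).2
        have : τ n < 1 := lt_of_lt_of_le (not_le.mp h) hs1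
        constructor
        · nlinarith
        · nlinarith
  -- telescoping
  have htel : ∀ T, 1 ≤ T →
      ∑ t ∈ Finset.Icc 1 T, ((if s t ≤ τ t then (1:ℝ) else 0) - (1 - α))
        = (τ 1 - τ (T + 1)) / η := by
    intro T hT
    induction T, hT using Nat.le_induction with
    | base =>
      rw [Finset.Icc_self, Finset.sum_singleton, hupd 1 le_rfl]
      field_simp
      ring
    | succ n hn ih =>
      rw [Finset.sum_Icc_succ_top (by omega), ih, hupd (n+1) (by omega)]
      field_simp
      ring
  rw [htel T hT]
  have hb := hbound (T + 1) (by omega)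
  rw [abs_div, abs_of_pos hη, div_le_iff₀ hη]
  have h1 : 1 / η * η = 1 := by field_simp
  rcases le_total α (1 - α) with hc | hc
  · rw [max_eq_right hc]
    rw [abs_le]
    constructor
    · nlinarith [hτ1.1, hb.2, h1]
    · nlinarith [hτ1.2, hb.1, h1]
  · rw [max_eq_left hc]
    rw [abs_le]
    constructor
    · nlinarith [hτ1.1, hb.2, h1]
    · nlinarith [hτ1.2, hb.1, h1]
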